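/- arXiv:2404.16058 — 3 statements merged into one kernel-verified Lean document; each statement's English description precedes it below -/
import Mathlib

section
/- Let X be a reflexive real Banach space, D ⊆ X convex and closed, φ : X → ℝ locally Lipschitz, and x₀ ∈ ∂D. Suppose (I − ∇φ)(x₀) ⊆ D, i.e., for every x* ∈ ∂φ(x₀) and every y ∈ 𝓕(x*) one has x₀ − y ∈ D, where 𝓕 is the duality map. Then ∂φ is outwardly directed at x₀: ∂φ(x₀) ∩ (−∂δ_D(x₀)) ⊆ {0}. -/
open Filter Set

variable {X : Type*} [NormedAddCommGroup X] [NormedSpace ℝ X] [CompleteSpace X]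

/-- The Clarke generalized directional derivative of `φ` at `x` in direction `h`. -/
noncomputable def clarkeDeriv (φ : X → ℝ) (x h : X) : ℝ :=
  Filter.limsup (fun p : X × ℝ => (φ (p.1 + p.2 • h) - φ p.1) / p.2)
    ((nhds x) ×ˢ (nhdsWithin 0 (Set.Ioi (0 : ℝ))))

/-- The Clarke subdifferential of `φ` at `x`. -/
def clarkeSubdiff (φ : X → ℝ) (x : X) : Set (X →L[ℝ] ℝ) :=
  {xs | ∀ h : X, xs h ≤ clarkeDeriv φ x h}

/-- The duality map `𝓕 : X* → 2^X` on a reflexive space: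
`𝓕(x*) = {x : ⟨x*, x⟩ = ‖x*‖² = ‖x‖²}`. -/
def dualityMap (xs : X →L[ℝ] ℝ) : Set X :=
  {x : X | xs x = ‖xs‖ ^ 2 ∧ ‖xs‖ ^ 2 = ‖x‖ ^ 2}

theorem outwardly_directed_of_schauder_invariance
    (hrefl : Function.Surjective (NormedSpace.inclusionInDoubleDual ℝ X))
    (D : Set X) (hDconv : Convex ℝ D) (hDcl : IsClosed D)
    (φ : X → ℝ) (hφ : LocallyLipschitz φ)
    {x₀ : X} (hx₀ : x₀ ∈ frontier D)
    (hinv : ∀ xs ∈ clarkeSubdiff φ x₀, ∀ y ∈ dualityMap xs, x₀ - y ∈ D) :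
    ∀ zs ∈ clarkeSubdiff φ x₀, (∀ z ∈ D, 0 ≤ zs (z - x₀)) → zs = 0 := by
  intro zs hzs hpos
  by_contra hne
  -- find a norming functional for `zs` in the double dual
  obtain ⟨F, hF1, hFz⟩ := exists_dual_vector ℝ zs (norm_ne_zero_iff.mpr hne)
  obtain ⟨u, hu⟩ := hrefl F
  have hnormu : ‖u‖ = 1 := by
    have : ‖NormedSpace.inclusionInDoubleDual ℝ X u‖ = ‖u‖ :=
      (NormedSpace.inclusionInDoubleDualLi ℝ (E := X)).norm_map u
    rw [hu] at this
    rw [← this, hF1]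
  have hzu : zs u = ‖zs‖ := by
    rw [← hu] at hFz
    simpa [NormedSpace.dual_def] using hFz
  -- `y := ‖zs‖ • u` belongs to the duality map of `zs`
  set y : X := ‖zs‖ • u with hy
  have hymem : y ∈ dualityMap zs := by
    constructor
    · simp [hy, hzu, sq]
    · simp [hy, norm_smul, hnormu, sq]
  have hxD : x₀ - y ∈ D := hinv zs hzs y hymem
  have h0 : (0 : ℝ) ≤ zs (x₀ - y - x₀) := hpos _ hxD
  have : zs (x₀ - y - x₀) = -‖zs‖ ^ 2 := by
    simp [hy, hzu, sq]
  rw [this] at h0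
  have : ‖zs‖ = 0 := by nlinarith [norm_nonneg zs]
  exact hne (norm_eq_zero.mp this)
end

section
/- (Von Neumann minimax / saddle point theorem) Let X, Y be Hausdorff topological vector spaces, C ⊆ X and D ⊆ Y convex compact sets, and ψ : C × D → ℝ such that x ↦ ψ(x, y) is upper semicontinuous and concave for each y ∈ D, and y ↦ ψ(x, y) is lower semicontinuous and convex for each x ∈ C. Then ψ has a saddle point (x̄, ȳ) ∈ C × D: ψ(x, ȳ) ≤ ψ(x̄, ȳ) ≤ ψ(x̄, y) for all (x, y) ∈ C × D. -/
open Set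

section SionHelpers

variable {α : Type*} [TopologicalSpace α]

lemma sion_neg_usc {f : α → ℝ} {s : Set α} (h : LowerSemicontinuousOn f s) :
    UpperSemicontinuousOn (fun x => -f x) s := by
  intro x hx b hb
  have hb0 : -f x < b := hb
  have hb' : -b < f x := by linarith
  filter_upwards [h x hx (-b) hb'] with x' hx'
  show -f x' < b
  linarith

lemma sion_neg_lsc {f : α → ℝ} {s : Set α} (h : UpperSemicontinuousOn f s) :
    LowerSemicontinuousOn (fun x => -f x) s := by
  intro x hx b hb
  have hb0 : b < -f x := hb
  have hb' : f x < -b := by linarith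
  filter_upwards [h x hx (-b) hb'] with x' hx'
  show b < -f x'
  linarith

lemma sion_superlevel_closed {f : α → ℝ} {s : Set α} (hs : IsClosed s)
    (hf : UpperSemicontinuousOn f s) (c : ℝ) :
    IsClosed {x | x ∈ s ∧ c ≤ f x} := by
  have hsub : {x | x ∈ s ∧ c ≤ f x} ⊆ s := fun x hx => hx.1
  apply isClosed_of_closure_subset
  intro x hx
  have hxs : x ∈ s := hs.closure_subset (closure_mono hsub hx)
  refine ⟨hxs, ?_⟩
  by_contra hcon
  push_neg at hcon
  have hev : ∀ᶠ x' in nhdsWithin x s, f x' < c := hf x hxs c hcon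
  have hne : (nhdsWithin x {x | x ∈ s ∧ c ≤ f x}).NeBot :=
    mem_closure_iff_nhdsWithin_neBot.1 hx
  have hev2 : ∀ᶠ x' in nhdsWithin x {x | x ∈ s ∧ c ≤ f x}, f x' < c :=
    hev.filter_mono (nhdsWithin_mono x hsub)
  have hev3 : ∀ᶠ x' in nhdsWithin x {x | x ∈ s ∧ c ≤ f x},
      x' ∈ {x | x ∈ s ∧ c ≤ f x} := self_mem_nhdsWithin
  obtain ⟨x', hx'1, hx'2⟩ := (hev2.and hev3).exists
  linarith [hx'2.2]

/-- An upper semicontinuous function attains its maximum on a nonempty compact closed set. -/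
lemma sion_usc_exists_max {f : α → ℝ} {s : Set α} (hcomp : IsCompact s) (hcl : IsClosed s)
    (hne : s.Nonempty) (hf : UpperSemicontinuousOn f s) :
    ∃ a ∈ s, ∀ x ∈ s, f x ≤ f a := by
  have key : (s ∩ ⋂ b : s, {x | x ∈ s ∧ f ↑b ≤ f x}).Nonempty := by
    apply hcomp.inter_iInter_nonempty
    · intro b
      exact sion_superlevel_closed hcl hf (f ↑b)
    · intro u
      rcases u.eq_empty_or_nonempty with hu | hu
      · simpa [hu] using hne
      · obtain ⟨b₀, hb₀u, hb₀max⟩ := Finset.exists_max_image u (fun b => f ↑b) hu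
        refine ⟨↑b₀, b₀.2, ?_⟩
        simp only [Set.mem_iInter]
        intro b hb
        exact ⟨b₀.2, hb₀max b hb⟩
  obtain ⟨a, has, ha⟩ := key
  refine ⟨a, has, fun x hx => ?_⟩
  have := Set.mem_iInter.1 ha ⟨x, hx⟩
  exact this.2

lemma sion_lsc_exists_min {f : α → ℝ} {s : Set α} (hcomp : IsCompact s) (hcl : IsClosed s)
    (hne : s.Nonempty) (hf : LowerSemicontinuousOn f s) :
    ∃ a ∈ s, ∀ x ∈ s, f a ≤ f x := by
  obtain ⟨a, has, ha⟩ := sion_usc_exists_max hcomp hcl hne (sion_neg_usc hf)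
  exact ⟨a, has, fun x hx => by linarith [ha x hx]⟩

end SionHelpers

section SionMain

variable {X Y : Type*} [AddCommGroup X] [Module ℝ X] [TopologicalSpace X]
    [IsTopologicalAddGroup X] [ContinuousSMul ℝ X] [T2Space X]
    [AddCommGroup Y] [Module ℝ Y] [TopologicalSpace Y]
    [IsTopologicalAddGroup Y] [ContinuousSMul ℝ Y]

/-- Komiya's two-point lemma. -/
lemma sion_pair {C : Set X} {D : Set Y} (hDconv : Convex ℝ D) {ψ : X → Y → ℝ}
    (husc : ∀ y ∈ D, UpperSemicontinuousOn (fun x => ψ x y) C)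
    (hconc : ∀ y ∈ D, ConcaveOn ℝ C (fun x => ψ x y))
    (hlsc : ∀ x ∈ C, LowerSemicontinuousOn (fun y => ψ x y) D)
    (hconv : ∀ x ∈ C, ConvexOn ℝ D (fun y => ψ x y))
    {C' : Set X} (hC'sub : C' ⊆ C) (hC'conv : Convex ℝ C') (hC'comp : IsCompact C')
    {y₁ y₂ : Y} (hy₁ : y₁ ∈ D) (hy₂ : y₂ ∈ D) {α β : ℝ} (hαβ : α < β)
    (hβ : ∀ z ∈ segment ℝ y₁ y₂, ∃ x ∈ C', β ≤ ψ x z) :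
    ∃ x ∈ C', α ≤ ψ x y₁ ∧ α ≤ ψ x y₂ := by
  by_contra hcon
  push_neg at hcon
  set α' : ℝ := (α + β) / 2 with hα'
  have hαα' : α < α' := by simp only [hα']; linarith
  have hα'β : α' < β := by simp only [hα']; linarith
  have hC'cl : IsClosed C' := hC'comp.isClosed
  set A : Set X := {x | x ∈ C' ∧ α ≤ ψ x y₁} with hA
  set B : Set X := {x | x ∈ C' ∧ α ≤ ψ x y₂} with hB
  have hAcl : IsClosed A := sion_superlevel_closed hC'cl ((husc y₁ hy₁).mono hC'sub) α
  have hBcl : IsClosed B := sion_superlevel_closed hC'cl ((husc y₂ hy₂).mono hC'sub) α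
  have hABdisj : Disjoint A B := by
    rw [Set.disjoint_left]
    rintro x ⟨hxC', hx1⟩ ⟨_, hx2⟩
    exact absurd hx2 (not_le.2 (hcon x hxC' hx1))
  have hAcomp : IsCompact A := hC'comp.of_isClosed_subset hAcl fun x hx => hx.1
  have hBcomp : IsCompact B := hC'comp.of_isClosed_subset hBcl fun x hx => hx.1
  obtain ⟨U, V, hUopen, hVopen, hAU, hBV, hUV⟩ :=
    SeparatedNhds.of_isCompact_isCompact hAcomp hBcomp hABdisj
  set seg : Set Y := segment ℝ y₁ y₂ with hseg
  have hsegD : seg ⊆ D := hDconv.segment_subset hy₁ hy₂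
  set S : Y → Set X := fun z => {x | x ∈ C' ∧ α' ≤ ψ x z} with hS
  -- covering
  have hcover : ∀ z ∈ seg, S z ⊆ A ∪ B := by
    rintro z hz x ⟨hxC', hxz⟩
    obtain ⟨a, b, ha, hb, hab, rfl⟩ := hz
    have hxC : x ∈ C := hC'sub hxC'
    have hcomb : ψ x (a • y₁ + b • y₂) ≤ a * ψ x y₁ + b * ψ x y₂ :=
      (hconv x hxC).2 hy₁ hy₂ ha hb hab
    have : α ≤ ψ x y₁ ∨ α ≤ ψ x y₂ := by
      by_contra hneg
      push_neg at hneg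
      have h1 : a * ψ x y₁ ≤ a * α := mul_le_mul_of_nonneg_left hneg.1.le ha
      have h2 : b * ψ x y₂ ≤ b * α := mul_le_mul_of_nonneg_left hneg.2.le hb
      have h3 : a * α + b * α = α := by rw [← add_mul, hab, one_mul]
      have hxz' : α' ≤ ψ x (a • y₁ + b • y₂) := hxz
      linarith
    rcases this with h | h
    · exact Or.inl ⟨hxC', h⟩
    · exact Or.inr ⟨hxC', h⟩
  have hSne : ∀ z ∈ seg, (S z).Nonempty := by
    intro z hz
    obtain ⟨x, hx, hxβ⟩ := hβ z hz
    exact ⟨x, hx, by linarith⟩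
  have hSconn : ∀ z ∈ seg, IsPreconnected (S z) := by
    intro z hz
    have : Convex ℝ (S z) :=
      ((hconc z (hsegD hz)).subset hC'sub hC'conv).convex_ge α'
    exact this.isPreconnected
  -- each S z lies entirely in A or in B
  have hsplit : ∀ z ∈ seg, S z ⊆ A ∨ S z ⊆ B := by
    intro z hz
    have hsub : S z ⊆ U ∪ V := fun x hx =>
      (hcover z hz hx).elim (fun h => Or.inl (hAU h)) fun h => Or.inr (hBV h)
    rcases (hSconn z hz).subset_or_subset hUopen hVopen hUV hsub with h | h
    · left
      intro x hx
      rcases hcover z hz hx with hxA | hxB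
      · exact hxA
      · exact absurd (hBV hxB) (Set.disjoint_left.1 hUV (h hx))
    · right
      intro x hx
      rcases hcover z hz hx with hxA | hxB
      · exact absurd (h hx) (Set.disjoint_left.1 hUV (hAU hxA))
      · exact hxB
  set I : Set Y := {z ∈ seg | S z ⊆ A} with hI
  set J : Set Y := {z ∈ seg | S z ⊆ B} with hJ
  have hIJ : ∀ z ∈ seg, z ∈ I ∨ z ∈ J := by
    intro z hz
    rcases hsplit z hz with h | h
    · exact Or.inl ⟨hz, h⟩
    · exact Or.inr ⟨hz, h⟩
  have hIJdisj : ∀ z, z ∈ I → z ∈ J → False := by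
    rintro z ⟨hz, hzA⟩ ⟨_, hzB⟩
    obtain ⟨x, hx⟩ := hSne z hz
    exact Set.disjoint_left.1 hABdisj (hzA hx) (hzB hx)
  have hy₁I : y₁ ∈ I := by
    refine ⟨left_mem_segment ℝ y₁ y₂, fun x hx => ⟨hx.1, by linarith [hx.2]⟩⟩
  have hy₂J : y₂ ∈ J := by
    refine ⟨right_mem_segment ℝ y₁ y₂, fun x hx => ⟨hx.1, by linarith [hx.2]⟩⟩
  -- closure claims
  have hclosureI : ∀ z ∈ seg, z ∈ closure I → z ∈ I := by
    intro z hz hzcl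
    rcases hIJ z hz with h | h
    · exact h
    · -- z ∈ J; derive contradiction
      exfalso
      obtain ⟨x, hxC', hxβ⟩ := hβ z hz
      have hxB : x ∈ B := h.2 ⟨hxC', by linarith⟩
      have hxC : x ∈ C := hC'sub hxC'
      have hzD : z ∈ D := hsegD hz
      have hev : ∀ᶠ z' in nhdsWithin z D, α' < ψ x z' :=
        hlsc x hxC z hzD α' (by linarith)
      have hne : (nhdsWithin z I).NeBot := mem_closure_iff_nhdsWithin_neBot.1 hzcl
      have hID : I ⊆ D := fun w hw => hsegD hw.1
      have hev2 : ∀ᶠ z' in nhdsWithin z I, α' < ψ x z' :=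
        hev.filter_mono (nhdsWithin_mono z hID)
      obtain ⟨z', hz'1, hz'2⟩ := (hev2.and (self_mem_nhdsWithin : ∀ᶠ z' in
        nhdsWithin z I, z' ∈ I)).exists
      have hxA : x ∈ A := hz'2.2 ⟨hxC', le_of_lt hz'1⟩
      exact Set.disjoint_left.1 hABdisj hxA hxB
  have hclosureJ : ∀ z ∈ seg, z ∈ closure J → z ∈ J := by
    intro z hz hzcl
    rcases hIJ z hz with h | h
    · exfalso
      obtain ⟨x, hxC', hxβ⟩ := hβ z hz
      have hxA : x ∈ A := h.2 ⟨hxC', by linarith⟩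
      have hxC : x ∈ C := hC'sub hxC'
      have hzD : z ∈ D := hsegD hz
      have hev : ∀ᶠ z' in nhdsWithin z D, α' < ψ x z' :=
        hlsc x hxC z hzD α' (by linarith)
      have hne : (nhdsWithin z J).NeBot := mem_closure_iff_nhdsWithin_neBot.1 hzcl
      have hJD : J ⊆ D := fun w hw => hsegD hw.1
      have hev2 : ∀ᶠ z' in nhdsWithin z J, α' < ψ x z' :=
        hev.filter_mono (nhdsWithin_mono z hJD)
      obtain ⟨z', hz'1, hz'2⟩ := (hev2.and (self_mem_nhdsWithin : ∀ᶠ z' in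
        nhdsWithin z J, z' ∈ J)).exists
      have hxB : x ∈ B := hz'2.2 ⟨hxC', le_of_lt hz'1⟩
      exact Set.disjoint_left.1 hABdisj hxA hxB
    · exact h
  -- contradiction with connectedness of the segment
  have hsegconn : IsPreconnected seg := (convex_segment y₁ y₂).isPreconnected
  have := hsegconn (closure J)ᶜ (closure I)ᶜ
    (isClosed_closure.isOpen_compl) (isClosed_closure.isOpen_compl)
    (by
      intro z hz
      by_contra hcnot
      simp only [Set.mem_union, Set.mem_compl_iff] at hcnot
      push_neg at hcnot
      exact hIJdisj z (hclosureI z hz hcnot.2) (hclosureJ z hz hcnot.1))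
    ⟨y₁, hy₁I.1, fun hc => hIJdisj y₁ hy₁I (hclosureJ y₁ hy₁I.1 hc)⟩
    ⟨y₂, hy₂J.1, fun hc => hIJdisj y₂ (hclosureI y₂ hy₂J.1 hc) hy₂J⟩
  obtain ⟨z, hzseg, hzU, hzV⟩ := this
  rcases hIJ z hzseg with h | h
  · exact hzV (subset_closure h)
  · exact hzU (subset_closure h)

/-- Komiya's finite intersection lemma. -/
lemma sion_finset {C : Set X} {D : Set Y} (hDconv : Convex ℝ D) {ψ : X → Y → ℝ}
    (husc : ∀ y ∈ D, UpperSemicontinuousOn (fun x => ψ x y) C)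
    (hconc : ∀ y ∈ D, ConcaveOn ℝ C (fun x => ψ x y))
    (hlsc : ∀ x ∈ C, LowerSemicontinuousOn (fun y => ψ x y) D)
    (hconv : ∀ x ∈ C, ConvexOn ℝ D (fun y => ψ x y))
    (F : Finset Y) (hFD : ↑F ⊆ D) :
    ∀ C' : Set X, C' ⊆ C → C'.Nonempty → Convex ℝ C' → IsCompact C' →
    ∀ α β : ℝ, α < β → (∀ y ∈ D, ∃ x ∈ C', β ≤ ψ x y) →
    ∃ x ∈ C', ∀ y ∈ F, α ≤ ψ x y := by
  classical
  induction F using Finset.induction_on with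
  | empty =>
    intro C' _ hC'ne _ _ α β _ _
    obtain ⟨x, hx⟩ := hC'ne
    exact ⟨x, hx, fun y hy => absurd hy (Finset.notMem_empty y)⟩
  | insert y₀ F' hy₀notF ih =>
    intro C' hC'sub hC'ne hC'conv hC'comp α β hαβ hβ
    have hy₀D : y₀ ∈ D := hFD (Finset.mem_coe.2 (Finset.mem_insert_self y₀ F'))
    have hF'D : ↑F' ⊆ D := fun y hy =>
      hFD (Finset.mem_coe.2 (Finset.mem_insert_of_mem (Finset.mem_coe.1 hy)))
    set β' : ℝ := (α + β) / 2 with hβ'def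
    have hαβ' : α < β' := by simp only [hβ'def]; linarith
    have hβ'β : β' < β := by simp only [hβ'def]; linarith
    set C'' : Set X := {x | x ∈ C' ∧ β' ≤ ψ x y₀} with hC''def
    have hC''sub' : C'' ⊆ C' := fun x hx => hx.1
    have hC''sub : C'' ⊆ C := fun x hx => hC'sub hx.1
    have hC''ne : C''.Nonempty := by
      obtain ⟨x, hx, hxβ⟩ := hβ y₀ hy₀D
      exact ⟨x, hx, by linarith⟩
    have hC''conv : Convex ℝ C'' :=
      ((hconc y₀ hy₀D).subset hC'sub hC'conv).convex_ge β'
    have hC''cl : IsClosed C'' :=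
      sion_superlevel_closed hC'comp.isClosed ((husc y₀ hy₀D).mono hC'sub) β'
    have hC''comp : IsCompact C'' := hC'comp.of_isClosed_subset hC''cl hC''sub'
    have hβ'' : ∀ y ∈ D, ∃ x ∈ C'', β' ≤ ψ x y := by
      intro y hyD
      obtain ⟨x, hxC', hx1, hx2⟩ := sion_pair hDconv husc hconc hlsc hconv hC'sub hC'conv
        hC'comp hyD hy₀D hβ'β (fun z hz => hβ z (hDconv.segment_subset hyD hy₀D hz))
      exact ⟨x, ⟨hxC', hx2⟩, hx1⟩
    obtain ⟨x, hxC'', hx⟩ := ih hF'D C'' hC''sub hC''ne hC''conv hC''comp α β' hαβ' hβ''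
    refine ⟨x, hC''sub' hxC'', fun y hy => ?_⟩
    rcases Finset.mem_insert.1 hy with rfl | hy'
    · linarith [hxC''.2]
    · exact hx y hy'

/-- Core of Sion's minimax theorem: existence of a maximin point at level `c`. -/
lemma sion_core {C : Set X} {D : Set Y} (hCne : C.Nonempty)
    (hCconv : Convex ℝ C) (hCcomp : IsCompact C) (hDconv : Convex ℝ D)
    {ψ : X → Y → ℝ}
    (husc : ∀ y ∈ D, UpperSemicontinuousOn (fun x => ψ x y) C)
    (hconc : ∀ y ∈ D, ConcaveOn ℝ C (fun x => ψ x y))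
    (hlsc : ∀ x ∈ C, LowerSemicontinuousOn (fun y => ψ x y) D)
    (hconv : ∀ x ∈ C, ConvexOn ℝ D (fun y => ψ x y))
    (c : ℝ) (hc : ∀ y ∈ D, ∃ x ∈ C, c ≤ ψ x y) :
    ∃ x ∈ C, ∀ y ∈ D, c ≤ ψ x y := by
  classical
  have hCcl : IsClosed C := hCcomp.isClosed
  set t : D × ℕ → Set X := fun p => {x | x ∈ C ∧ c - 1 / (p.2 + 1) ≤ ψ x ↑p.1} with ht
  have key : (C ∩ ⋂ p : D × ℕ, t p).Nonempty := by
    apply hCcomp.inter_iInter_nonempty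
    · intro p
      exact sion_superlevel_closed hCcl (husc ↑p.1 p.1.2) _
    · intro u
      set n : ℕ := u.sup (fun p => p.2) with hn
      have hα : c - 1 / (n + 1) < c := by
        have : (0 : ℝ) < 1 / (n + 1) := by positivity
        linarith
      set F : Finset Y := u.image (fun p => ↑p.1) with hF
      have hFD : ↑F ⊆ D := by
        intro y hy
        simp only [hF, Finset.coe_image, Set.mem_image, Finset.mem_coe] at hy
        obtain ⟨p, _, rfl⟩ := hy
        exact p.1.2
      obtain ⟨x, hxC, hx⟩ := sion_finset hDconv husc hconc hlsc hconv F hFD C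
        subset_rfl hCne hCconv hCcomp (c - 1 / (n + 1)) c hα hc
      refine ⟨x, hxC, ?_⟩
      simp only [Set.mem_iInter]
      intro p hp
      refine ⟨hxC, ?_⟩
      have hpn : p.2 ≤ n := Finset.le_sup hp
      have h1 : 1 / ((n : ℝ) + 1) ≤ 1 / (p.2 + 1) := by
        apply one_div_le_one_div_of_le
        · positivity
        · exact_mod_cast Nat.succ_le_succ hpn
      have h2 : c - 1 / (n + 1) ≤ ψ x ↑p.1 := by
        apply hx
        simp only [hF, Finset.mem_image]
        exact ⟨p, hp, rfl⟩
      linarith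
  obtain ⟨x, hxC, hx⟩ := key
  refine ⟨x, hxC, fun y hyD => ?_⟩
  by_contra hcon
  push_neg at hcon
  obtain ⟨n, hn⟩ := exists_nat_one_div_lt (show (0:ℝ) < c - ψ x y by linarith)
  have := (Set.mem_iInter.1 hx (⟨y, hyD⟩, n)).2
  simp only at this
  linarith

end SionMain

/-- Von Neumann minimax / saddle point theorem. -/
theorem vonNeumann_saddle_point
    {X Y : Type*} [AddCommGroup X] [Module ℝ X] [TopologicalSpace X]
    [IsTopologicalAddGroup X] [ContinuousSMul ℝ X] [T2Space X]
    [AddCommGroup Y] [Module ℝ Y] [TopologicalSpace Y]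
    [IsTopologicalAddGroup Y] [ContinuousSMul ℝ Y] [T2Space Y]
    (C : Set X) (D : Set Y) (hCne : C.Nonempty) (hDne : D.Nonempty)
    (hCconv : Convex ℝ C) (hCcomp : IsCompact C)
    (hDconv : Convex ℝ D) (hDcomp : IsCompact D)
    (ψ : X → Y → ℝ)
    (husc : ∀ y ∈ D, UpperSemicontinuousOn (fun x => ψ x y) C)
    (hconc : ∀ y ∈ D, ConcaveOn ℝ C (fun x => ψ x y))
    (hlsc : ∀ x ∈ C, LowerSemicontinuousOn (fun y => ψ x y) D)
    (hconv : ∀ x ∈ C, ConvexOn ℝ D (fun y => ψ x y)) :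
    ∃ xb ∈ C, ∃ yb ∈ D, ∀ x ∈ C, ∀ y ∈ D, ψ x yb ≤ ψ xb yb ∧ ψ xb yb ≤ ψ xb y := by
  classical
  have hCcl : IsClosed C := hCcomp.isClosed
  have hDcl : IsClosed D := hDcomp.isClosed
  -- the swapped function
  set φ : Y → X → ℝ := fun y x => -ψ x y with hφ
  have huscφ : ∀ x ∈ C, UpperSemicontinuousOn (fun y => φ y x) D :=
    fun x hx => sion_neg_usc (hlsc x hx)
  have hconcφ : ∀ x ∈ C, ConcaveOn ℝ D (fun y => φ y x) :=
    fun x hx => (hconv x hx).neg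
  have hlscφ : ∀ y ∈ D, LowerSemicontinuousOn (fun x => φ y x) C :=
    fun y hy => sion_neg_lsc (husc y hy)
  have hconvφ : ∀ y ∈ D, ConvexOn ℝ C (fun x => φ y x) :=
    fun y hy => (hconc y hy).neg
  -- sup in x attained
  have hmaxx : ∀ y ∈ D, ∃ a ∈ C, ∀ x ∈ C, ψ x y ≤ ψ a y :=
    fun y hy => sion_usc_exists_max hCcomp hCcl hCne (husc y hy)
  have hminy : ∀ x ∈ C, ∃ b ∈ D, ∀ y ∈ D, ψ x b ≤ ψ x y :=
    fun x hx => sion_lsc_exists_min hDcomp hDcl hDne (hlsc x hx)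
  have hmaxyφ : ∀ x ∈ C, ∃ b ∈ D, ∀ y ∈ D, φ y x ≤ φ b x :=
    fun x hx => sion_usc_exists_max hDcomp hDcl hDne (huscφ x hx)
  -- definitions of the values
  set g : Y → ℝ := fun y => sSup ((fun x => ψ x y) '' C) with hg
  set c : ℝ := sInf (g '' D) with hc
  set h : X → ℝ := fun x => sSup ((fun y => φ y x) '' D) with hh
  set cφ : ℝ := sInf (h '' C) with hcφ
  -- basic bounds
  have hbddAx : ∀ y ∈ D, BddAbove ((fun x => ψ x y) '' C) := by
    intro y hy
    obtain ⟨a, haC, ha⟩ := hmaxx y hy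
    exact ⟨ψ a y, by rintro _ ⟨x, hx, rfl⟩; exact ha x hx⟩
  have hbddAyφ : ∀ x ∈ C, BddAbove ((fun y => φ y x) '' D) := by
    intro x hx
    obtain ⟨b, hbD, hb⟩ := hmaxyφ x hx
    exact ⟨φ b x, by rintro _ ⟨y, hy, rfl⟩; exact hb y hy⟩
  have hgle : ∀ y ∈ D, ∀ x ∈ C, ψ x y ≤ g y := by
    intro y hy x hx
    exact le_csSup (hbddAx y hy) ⟨x, hx, rfl⟩
  have hgmax : ∀ y ∈ D, ∃ a ∈ C, g y ≤ ψ a y := by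
    intro y hy
    obtain ⟨a, haC, ha⟩ := hmaxx y hy
    refine ⟨a, haC, csSup_le (hCne.image _) ?_⟩
    rintro _ ⟨x, hx, rfl⟩
    exact ha x hx
  have hhle : ∀ x ∈ C, ∀ y ∈ D, φ y x ≤ h x := by
    intro x hx y hy
    exact le_csSup (hbddAyφ x hx) ⟨y, hy, rfl⟩
  have hhmax : ∀ x ∈ C, ∃ b ∈ D, h x ≤ φ b x := by
    intro x hx
    obtain ⟨b, hbD, hb⟩ := hmaxyφ x hx
    refine ⟨b, hbD, csSup_le (hDne.image _) ?_⟩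
    rintro _ ⟨y, hy, rfl⟩
    exact hb y hy
  -- g is bounded below on D
  have hCne' := hCne
  obtain ⟨x₀, hx₀⟩ := hCne'
  obtain ⟨b₀, hb₀D, hb₀⟩ := hminy x₀ hx₀
  have hbddBg : BddBelow (g '' D) := by
    refine ⟨ψ x₀ b₀, ?_⟩
    rintro _ ⟨y, hy, rfl⟩
    exact le_trans (hb₀ y hy) (hgle y hy x₀ hx₀)
  -- h is bounded below on C
  have hDne' := hDne
  obtain ⟨y₀, hy₀⟩ := hDne'
  obtain ⟨a₀, ha₀C, ha₀⟩ := hmaxx y₀ hy₀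
  have hbddBh : BddBelow (h '' C) := by
    refine ⟨-(ψ a₀ y₀), ?_⟩
    rintro _ ⟨x, hx, rfl⟩
    have : φ y₀ x ≤ h x := hhle x hx y₀ hy₀
    have h2 : -(ψ a₀ y₀) ≤ φ y₀ x := by
      simp only [hφ, neg_le_neg_iff]
      exact ha₀ x hx
    linarith
  -- hypotheses of the core lemma
  have hcc : ∀ y ∈ D, ∃ x ∈ C, c ≤ ψ x y := by
    intro y hy
    obtain ⟨a, haC, ha⟩ := hgmax y hy
    have : c ≤ g y := csInf_le hbddBg ⟨y, hy, rfl⟩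
    exact ⟨a, haC, by linarith⟩
  have hccφ : ∀ x ∈ C, ∃ y ∈ D, cφ ≤ φ y x := by
    intro x hx
    obtain ⟨b, hbD, hb⟩ := hhmax x hx
    have : cφ ≤ h x := csInf_le hbddBh ⟨x, hx, rfl⟩
    exact ⟨b, hbD, by linarith⟩
  -- the two optimal points
  obtain ⟨xb, hxbC, hxb⟩ := sion_core hCne hCconv hCcomp hDconv husc hconc hlsc hconv c hcc
  obtain ⟨yb, hybD, hyb⟩ := sion_core hDne hDconv hDcomp hCconv huscφ hconcφ hlscφ hconvφ cφ hccφ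
  -- weak duality : -c ≤ cφ
  have hweak : -c ≤ cφ := by
    apply le_csInf (hCne.image _)
    rintro _ ⟨x, hx, rfl⟩
    obtain ⟨b, hbD, hb⟩ := hminy x hx
    have hm_le_c : ψ x b ≤ c := by
      apply le_csInf (hDne.image _)
      rintro _ ⟨y, hy, rfl⟩
      exact le_trans (hb y hy) (hgle y hy x hx)
    have : φ b x ≤ h x := hhle x hx b hbD
    simp only [hφ] at this
    linarith
  -- conclusion
  refine ⟨xb, hxbC, yb, hybD, fun x hx y hy => ?_⟩
  have h1 : c ≤ ψ xb y := hxb y hy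
  have h2 : c ≤ ψ xb yb := hxb yb hybD
  have h3 : cφ ≤ -ψ x yb := hyb x hx
  have h4 : cφ ≤ -ψ xb yb := hyb xb hxbC
  constructor
  · linarith
  · linarith
end

section
/- Let X be a Banach space, J : X → ℝ locally Lipschitz, and let σ(·, u₀) solve σ' = −V(σ) with V(u) = ρ(u)ψ(u)v(u), where ρ, ψ : X → [0,1] are locally Lipschitz and v satisfies ⟨x*, v(x)⟩ ≥ b/8 for all x* ∈ ∂J(x) whenever x is in a region R, while V = 0 outside a larger region. Then t ↦ J(σ(t, u₀)) is non-increasing, and if σ(s, u₀) ∈ R with ρ(σ(s,u₀)) = ψ(σ(s,u₀)) = 1 for all s ∈ [t₁, t₂], then J(σ(t₁, u₀)) − J(σ(t₂, u₀)) ≥ (b/8)(t₂ − t₁). -/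
open Filter Set

variable {X : Type*} [NormedAddCommGroup X] [NormedSpace ℝ X] [CompleteSpace X]

open Topology

abbrev clFil (x : X) : Filter (X × ℝ) := (nhds x) ×ˢ (nhdsWithin 0 (Set.Ioi (0 : ℝ)))

lemma clarke_ev_bound (J : X → ℝ) (hJ : LocallyLipschitz J) (x : X) :
    ∃ K : ℝ, 0 ≤ K ∧ ∀ h : X, ∀ᶠ p : X × ℝ in clFil x,
      |(J (p.1 + p.2 • h) - J p.1) / p.2| ≤ K * ‖h‖ := by
  obtain ⟨K, s, hs, hK⟩ := hJ x
  obtain ⟨ε, hε, hball⟩ := Metric.mem_nhds_iff.1 hs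
  refine ⟨K, K.coe_nonneg, fun h => ?_⟩
  have h1 : ∀ᶠ y in 𝓝 x, y ∈ Metric.ball x (ε / 2) :=
    Metric.ball_mem_nhds x (by linarith)
  have h2 : ∀ᶠ t : ℝ in 𝓝[>] 0, t ∈ Ioo (0:ℝ) (ε / 2 / (‖h‖ + 1)) := by
    apply Ioo_mem_nhdsGT_of_mem
    constructor
    · rfl
    · positivity
  filter_upwards [h1.prod_mk h2] with p hp
  obtain ⟨hp1, hp2, hp3⟩ := hp
  have hhn : ‖h‖ + 1 > 0 := by positivity
  have hsm : p.2 * ‖h‖ < ε / 2 := by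
    calc p.2 * ‖h‖ ≤ p.2 * (‖h‖ + 1) := by nlinarith
    _ < ε / 2 := by rw [← lt_div_iff₀ hhn]; exact hp3
  have hmem1 : p.1 ∈ s := hball (by
    simp only [Metric.mem_ball] at hp1 ⊢
    linarith)
  have hmem2 : p.1 + p.2 • h ∈ s := hball (by
    simp only [Metric.mem_ball, dist_eq_norm] at hp1 ⊢
    calc ‖p.1 + p.2 • h - x‖ ≤ ‖p.1 - x‖ + ‖p.2 • h‖ := by
          rw [add_sub_right_comm]; exact norm_add_le _ _
    _ = ‖p.1 - x‖ + p.2 * ‖h‖ := by rw [norm_smul, Real.norm_of_nonneg hp2.le]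
    _ < ε := by linarith)
  have hd := hK.dist_le_mul _ hmem2 _ hmem1
  simp only [Real.dist_eq, dist_eq_norm, add_sub_cancel_left, norm_smul,
    Real.norm_of_nonneg hp2.le] at hd
  rw [abs_div, abs_of_pos hp2, div_le_iff₀ hp2]
  calc |J (p.1 + p.2 • h) - J p.1| ≤ K * (p.2 * ‖h‖) := hd
  _ = K * ‖h‖ * p.2 := by ring

instance (x : X) : (clFil x).NeBot := Filter.prod_neBot.2 ⟨inferInstance, inferInstance⟩

lemma clarke_bddAbove (J : X → ℝ) (hJ : LocallyLipschitz J) (x h : X) :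
    IsBoundedUnder (· ≤ ·) (clFil x) (fun p : X × ℝ => (J (p.1 + p.2 • h) - J p.1) / p.2) := by
  obtain ⟨K, _, hK⟩ := clarke_ev_bound J hJ x
  exact ⟨K * ‖h‖, (hK h).mono fun p hp => (abs_le.1 hp).2⟩

lemma clarke_bddBelow (J : X → ℝ) (hJ : LocallyLipschitz J) (x h : X) :
    IsBoundedUnder (· ≥ ·) (clFil x) (fun p : X × ℝ => (J (p.1 + p.2 • h) - J p.1) / p.2) := by
  obtain ⟨K, _, hK⟩ := clarke_ev_bound J hJ x
  exact ⟨-(K * ‖h‖), (hK h).mono fun p hp => (abs_le.1 hp).1⟩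

lemma clarkeDeriv_le (J : X → ℝ) (hJ : LocallyLipschitz J) (x : X) :
    ∃ K : ℝ, 0 ≤ K ∧ ∀ h : X, |clarkeDeriv J x h| ≤ K * ‖h‖ := by
  obtain ⟨K, hK0, hK⟩ := clarke_ev_bound J hJ x
  refine ⟨K, hK0, fun h => abs_le.2 ⟨?_, ?_⟩⟩
  · exact le_limsup_of_frequently_le (((hK h).mono fun p hp => (abs_le.1 hp).1).frequently)
      (clarke_bddAbove J hJ x h)
  · exact limsup_le_of_le ((clarke_bddBelow J hJ x h).isCoboundedUnder_le)
      ((hK h).mono fun p hp => (abs_le.1 hp).2)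

lemma clarkeDeriv_zero (J : X → ℝ) (x : X) : clarkeDeriv J x 0 = 0 := by
  unfold clarkeDeriv
  have : (fun p : X × ℝ => (J (p.1 + p.2 • (0:X)) - J p.1) / p.2) = fun _ => (0:ℝ) := by
    funext p; simp
  rw [this, limsup_const]

lemma tendsto_shift (x : X) (h : X) :
    Tendsto (fun p : X × ℝ => (p.1 + p.2 • h, p.2)) (clFil x) (clFil x) := by
  refine Tendsto.prodMk ?_ tendsto_snd
  have h2 : Tendsto (fun p : X × ℝ => p.2) (clFil x) (𝓝 (0:ℝ)) :=
    tendsto_snd.mono_right nhdsWithin_le_nhds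
  have := (tendsto_fst (f := 𝓝 x) (g := 𝓝[>] (0:ℝ))).add (h2.smul_const h)
  simpa using this

lemma tendsto_scale (x : X) (c : ℝ) (hc : 0 < c) :
    Tendsto (fun p : X × ℝ => (p.1, c * p.2)) (clFil x) (clFil x) := by
  refine Tendsto.prodMk tendsto_fst ?_
  apply tendsto_nhdsWithin_of_tendsto_nhds_of_eventually_within
  · have h2 : Tendsto (fun p : X × ℝ => p.2) (clFil x) (𝓝 (0:ℝ)) :=
      tendsto_snd.mono_right nhdsWithin_le_nhds
    simpa using h2.const_mul c
  · have : ∀ᶠ p : X × ℝ in clFil x, p.2 ∈ Ioi (0:ℝ) :=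
      tendsto_snd.eventually eventually_mem_nhdsWithin
    exact this.mono fun p hp => mul_pos hc hp

lemma clarkeDeriv_add_le (J : X → ℝ) (hJ : LocallyLipschitz J) (x h₁ h₂ : X) :
    clarkeDeriv J x (h₁ + h₂) ≤ clarkeDeriv J x h₁ + clarkeDeriv J x h₂ := by
  set Q : X → X × ℝ → ℝ := fun h p => (J (p.1 + p.2 • h) - J p.1) / p.2 with hQ
  set m : X × ℝ → X × ℝ := fun p => (p.1 + p.2 • h₁, p.2) with hm
  have htm : Tendsto m (clFil x) (clFil x) := tendsto_shift x h₁
  obtain ⟨K, hK0, hK⟩ := clarke_ev_bound J hJ x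
  have hsplit : Q (h₁ + h₂) = (Q h₂ ∘ m) + Q h₁ := by
    funext p
    simp only [hQ, hm, Function.comp, Pi.add_apply]
    rw [← add_div, smul_add, ← add_assoc, sub_add_sub_cancel]
  have hb2m_le : IsBoundedUnder (· ≤ ·) (clFil x) (Q h₂ ∘ m) :=
    ⟨K * ‖h₂‖, (htm.eventually (hK h₂)).mono fun p hp => (abs_le.1 hp).2⟩
  have hb2m_ge : IsBoundedUnder (· ≥ ·) (clFil x) (Q h₂ ∘ m) :=
    ⟨-(K * ‖h₂‖), (htm.eventually (hK h₂)).mono fun p hp => (abs_le.1 hp).1⟩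
  have step1 : limsup (Q (h₁ + h₂)) (clFil x) ≤
      limsup (Q h₂ ∘ m) (clFil x) + limsup (Q h₁) (clFil x) := by
    rw [hsplit]
    exact limsup_add_le hb2m_ge hb2m_le
      ((clarke_bddBelow J hJ x h₁).isCoboundedUnder_le) (clarke_bddAbove J hJ x h₁)
  have step2 : limsup (Q h₂ ∘ m) (clFil x) ≤ limsup (Q h₂) (clFil x) := by
    rw [limsup_comp]
    refine limsup_le_limsup_of_le htm ?_ (clarke_bddAbove J hJ x h₂)
    show IsCobounded _ (map (Q h₂) (map m (clFil x)))
    rw [map_map]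
    exact hb2m_ge.isCoboundedUnder_le
  calc clarkeDeriv J x (h₁ + h₂) = limsup (Q (h₁ + h₂)) (clFil x) := rfl
  _ ≤ limsup (Q h₂ ∘ m) (clFil x) + limsup (Q h₁) (clFil x) := step1
  _ ≤ limsup (Q h₂) (clFil x) + limsup (Q h₁) (clFil x) := by linarith [step2]
  _ = clarkeDeriv J x h₁ + clarkeDeriv J x h₂ := by rw [add_comm]; rfl

lemma clarkeDeriv_smul_le (J : X → ℝ) (hJ : LocallyLipschitz J) (x h : X)
    (c : ℝ) (hc : 0 < c) : clarkeDeriv J x (c • h) ≤ c * clarkeDeriv J x h := by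
  set Q : X → X × ℝ → ℝ := fun h p => (J (p.1 + p.2 • h) - J p.1) / p.2 with hQ
  set n : X × ℝ → X × ℝ := fun p => (p.1, c * p.2) with hn
  have htn : Tendsto n (clFil x) (clFil x) := tendsto_scale x c hc
  obtain ⟨K, hK0, hK⟩ := clarke_ev_bound J hJ x
  have hsplit : Q (c • h) = fun p => c * (Q h (n p)) := by
    funext p
    simp only [hQ, hn]
    rw [smul_smul, mul_comm p.2 c, ← smul_smul, ← mul_div_assoc,
      mul_div_mul_left _ _ (ne_of_gt hc)]
  show limsup (Q (c • h)) (clFil x) ≤ c * clarkeDeriv J x h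
  rw [hsplit]
  have hcb : IsCoboundedUnder (· ≤ ·) (clFil x) (fun p => c * Q h (n p)) := by
    refine IsBoundedUnder.isCoboundedUnder_le ⟨c * (-(K * ‖h‖)), ?_⟩
    exact (htn.eventually (hK h)).mono fun p hp =>
      mul_le_mul_of_nonneg_left (abs_le.1 hp).1 hc.le
  refine le_of_forall_gt_imp_ge_of_dense fun r hr => ?_
  have hAr : clarkeDeriv J x h < r / c := by
    rw [lt_div_iff₀ hc, mul_comm]; exact hr
  have hev : ∀ᶠ p in clFil x, Q h p < r / c :=
    eventually_lt_of_limsup_lt hAr (clarke_bddAbove J hJ x h)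
  refine limsup_le_of_le hcb ?_
  exact (htn.eventually hev).mono fun p hp =>
    le_of_lt (by rwa [← lt_div_iff₀' hc])

lemma clarkeDeriv_smul (J : X → ℝ) (hJ : LocallyLipschitz J) (x h : X)
    (c : ℝ) (hc : 0 < c) : clarkeDeriv J x (c • h) = c * clarkeDeriv J x h := by
  refine le_antisymm (clarkeDeriv_smul_le J hJ x h c hc) ?_
  have := clarkeDeriv_smul_le J hJ x (c • h) c⁻¹ (inv_pos.2 hc)
  rw [smul_smul, inv_mul_cancel₀ (ne_of_gt hc), one_smul] at this
  calc c * clarkeDeriv J x h ≤ c * (c⁻¹ * clarkeDeriv J x (c • h)) :=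
        mul_le_mul_of_nonneg_left this hc.le
  _ = clarkeDeriv J x (c • h) := by field_simp

lemma exists_clarke_subgradient (J : X → ℝ) (hJ : LocallyLipschitz J) (x w : X) :
    ∃ g ∈ clarkeSubdiff J x, clarkeDeriv J x w ≤ g w := by
  obtain ⟨K, hK0, hK⟩ := clarkeDeriv_le J hJ x
  set N : X → ℝ := clarkeDeriv J x with hN
  have N0 : N 0 = 0 := clarkeDeriv_zero J x
  have Nadd : ∀ a c : X, N (a + c) ≤ N a + N c := clarkeDeriv_add_le J hJ x
  have Nhom : ∀ c : ℝ, 0 < c → ∀ a : X, N (c • a) = c * N a := fun c hc a =>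
    clarkeDeriv_smul J hJ x a c hc
  have Nneg : ∀ a : X, -N (-a) ≤ N a := by
    intro a
    have h1 := Nadd a (-a)
    rw [add_neg_cancel, N0] at h1
    linarith
  have main : ∀ h₀ : X, h₀ ≠ 0 → ∃ g ∈ clarkeSubdiff J x, N h₀ ≤ g h₀ := by
    intro h₀ hh₀
    set f := LinearPMap.mkSpanSingleton (K := ℝ) (L := ℝ) (σ := RingHom.id ℝ) h₀ (N h₀) hh₀ with hf
    have hdom : ∀ z : f.domain, f z ≤ N z := by
      rintro ⟨z, hz⟩
      have hz' : ∃ c : ℝ, c • h₀ = z := Submodule.mem_span_singleton.1 hz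
      obtain ⟨c, rfl⟩ := hz'
      have happ : f ⟨c • h₀, hz⟩ = c • N h₀ := LinearPMap.mkSpanSingleton'_apply _ _ _ c _
      rw [happ, smul_eq_mul]
      show c * N h₀ ≤ N (c • h₀)
      rcases lt_trichotomy c 0 with hc | hc | hc
      · have h1 : N (c • h₀) = (-c) * N (-h₀) := by
          rw [show c • h₀ = (-c) • (-h₀) by simp, Nhom (-c) (by linarith)]
        rw [h1]
        nlinarith [Nneg h₀]
      · subst hc
        simp only [zero_smul, zero_mul]
        exact le_of_eq N0.symm
      · rw [Nhom c hc]
    obtain ⟨g, hg1, hg2⟩ := exists_extension_of_le_sublinear f N Nhom Nadd hdom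
    have hbound : ∀ a : X, ‖g a‖ ≤ K * ‖a‖ := by
      intro a
      rw [Real.norm_eq_abs, abs_le]
      constructor
      · have h1 : g (-a) ≤ N (-a) := hg2 (-a)
        have h2 : N (-a) ≤ K * ‖a‖ := by
          have := (abs_le.1 (hK (-a))).2
          rwa [norm_neg] at this
        rw [map_neg] at h1
        linarith
      · exact (hg2 a).trans (abs_le.1 (hK a)).2
    set G := g.mkContinuous K hbound with hG
    have hGa : ∀ a : X, G a = g a := fun a => rfl
    refine ⟨G, fun h => by rw [hGa]; exact hg2 h, ?_⟩
    have := hg1 ⟨h₀, Submodule.mem_span_singleton_self h₀⟩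
    rw [hGa, this]
    exact le_of_eq (LinearPMap.mkSpanSingleton'_apply_self _ _ _ _).symm
  by_cases hw : w = 0
  · subst hw
    by_cases hX : ∃ h₀ : X, h₀ ≠ 0
    · obtain ⟨h₀, hh₀⟩ := hX
      obtain ⟨g, hg, _⟩ := main h₀ hh₀
      refine ⟨g, hg, ?_⟩
      rw [map_zero]
      exact le_of_eq N0
    · push_neg at hX
      refine ⟨0, fun h => ?_, by simpa using le_of_eq N0⟩
      rw [hX h]
      simpa using le_of_eq N0.symm
  · exact main w hw

lemma slope_lt_of_clarke_lt (J : X → ℝ) (hJ : LocallyLipschitz J) (σ : ℝ → X) (w : X) (t : ℝ)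
    (hd : HasDerivAt σ w t) (r : ℝ) (hr : clarkeDeriv J (σ t) w < r) :
    ∀ᶠ z in 𝓝[>] t, slope (fun s => J (σ s)) t z < r := by
  set x := σ t with hx
  obtain ⟨K, s, hs, hK⟩ := hJ x
  obtain ⟨ε, hε, hball⟩ := Metric.mem_nhds_iff.1 hs
  obtain ⟨r', hr1, hr2⟩ := exists_between hr
  set δ : ℝ := (r - r') / ((K : ℝ) + 1) with hδ
  have hKpos : (0:ℝ) < (K:ℝ) + 1 := by positivity
  have hδpos : 0 < δ := div_pos (by linarith) hKpos
  have hKδ : (K : ℝ) * δ < r - r' := by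
    have h1 : ((K:ℝ) + 1) * δ = r - r' := by
      rw [hδ, mul_div_cancel₀ _ (ne_of_gt hKpos)]
    nlinarith
  have hev : ∀ᶠ p in clFil x, (J (p.1 + p.2 • w) - J p.1) / p.2 < r' :=
    eventually_lt_of_limsup_lt hr1 (clarke_bddAbove J hJ x w)
  have htend : Tendsto (fun z : ℝ => ((x : X), z - t)) (𝓝[>] t) (clFil x) := by
    refine Tendsto.prodMk tendsto_const_nhds ?_
    apply tendsto_nhdsWithin_of_tendsto_nhds_of_eventually_within
    · have h1 : Tendsto (fun z : ℝ => z - t) (𝓝 t) (𝓝 (t - t)) :=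
        tendsto_id.sub tendsto_const_nhds
      rw [sub_self] at h1
      exact h1.mono_left nhdsWithin_le_nhds
    · exact eventually_mem_nhdsWithin.mono fun z hz => mem_Ioi.2 (sub_pos.2 hz)
  have hev1 : ∀ᶠ z in 𝓝[>] t, (J (x + (z - t) • w) - J x) / (z - t) < r' := htend.eventually hev
  have hlo : ∀ᶠ z in 𝓝 t, ‖σ z - σ t - (z - t) • w‖ ≤ δ * ‖z - t‖ :=
    (hasDerivAt_iff_isLittleO.1 hd).def hδpos
  have hmem1 : ∀ᶠ z in 𝓝 t, σ z ∈ Metric.ball x ε :=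
    hd.continuousAt.preimage_mem_nhds (Metric.ball_mem_nhds x hε)
  have hmem2 : ∀ᶠ z in 𝓝 t, x + (z - t) • w ∈ Metric.ball x ε := by
    have h1 : Tendsto (fun z : ℝ => x + (z - t) • w) (𝓝 t) (𝓝 x) := by
      have h2 : Tendsto (fun z : ℝ => z - t) (𝓝 t) (𝓝 (t - t)) :=
        tendsto_id.sub tendsto_const_nhds
      rw [sub_self] at h2
      simpa using tendsto_const_nhds.add (h2.smul_const w)
    exact h1 (Metric.ball_mem_nhds x hε)
  filter_upwards [hev1, (hlo.and (hmem1.and hmem2)).filter_mono nhdsWithin_le_nhds,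
    eventually_mem_nhdsWithin] with z hz1 hz2 hz3
  obtain ⟨hlo', hm1, hm2⟩ := hz2
  have hu : 0 < z - t := sub_pos.2 hz3
  have hd1 : |J (σ z) - J (x + (z - t) • w)| ≤ (K : ℝ) * ‖σ z - (x + (z - t) • w)‖ := by
    have := hK.dist_le_mul _ (hball hm1) _ (hball hm2)
    simpa [Real.dist_eq, dist_eq_norm] using this
  have hn : ‖σ z - (x + (z - t) • w)‖ ≤ δ * (z - t) := by
    have h1 : σ z - (x + (z - t) • w) = σ z - σ t - (z - t) • w := by
      rw [hx]; abel
    rw [h1]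
    calc ‖σ z - σ t - (z - t) • w‖ ≤ δ * ‖z - t‖ := hlo'
    _ = δ * (z - t) := by rw [Real.norm_of_nonneg hu.le]
  have hsl : slope (fun s => J (σ s)) t z =
      (J (σ z) - J (x + (z - t) • w)) / (z - t) + (J (x + (z - t) • w) - J x) / (z - t) := by
    rw [slope_def_field, ← add_div, sub_add_sub_cancel, hx]
  rw [hsl]
  have hfirst : (J (σ z) - J (x + (z - t) • w)) / (z - t) ≤ (K : ℝ) * δ := by
    rw [div_le_iff₀ hu]
    calc J (σ z) - J (x + (z - t) • w) ≤ |J (σ z) - J (x + (z - t) • w)| := le_abs_self _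
    _ ≤ (K : ℝ) * ‖σ z - (x + (z - t) • w)‖ := hd1
    _ ≤ (K : ℝ) * (δ * (z - t)) := mul_le_mul_of_nonneg_left hn K.coe_nonneg
    _ = (K : ℝ) * δ * (z - t) := by ring
  linarith

theorem energy_decay_along_flow (J : X → ℝ) (hJ : LocallyLipschitz J)
    (ρ ψ : X → ℝ) (hρ : ∀ x, ρ x ∈ Set.Icc (0 : ℝ) 1) (hψ : ∀ x, ψ x ∈ Set.Icc (0 : ℝ) 1)
    (hρlip : LocallyLipschitz ρ) (hψlip : LocallyLipschitz ψ)
    (v : X → X) (b : ℝ) (hb : 0 < b)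
    (R R' : Set X) (hRR' : R ⊆ R')
    (hv : ∀ x ∈ R, ∀ xs ∈ clarkeSubdiff J x, b / 8 ≤ xs (v x))
    (hpos : ∀ x ∈ R', ∀ xs ∈ clarkeSubdiff J x, 0 ≤ xs (v x))
    (hout : ∀ x ∉ R', ρ x * ψ x = 0)
    (σ : ℝ → X)
    (hσ : ∀ t : ℝ, HasDerivAt σ (-((ρ (σ t) * ψ (σ t)) • v (σ t))) t) :
    Antitone (fun t => J (σ t)) ∧
      ∀ t₁ t₂ : ℝ, t₁ ≤ t₂ →
        (∀ s ∈ Set.Icc t₁ t₂, σ s ∈ R ∧ ρ (σ s) = 1 ∧ ψ (σ s) = 1) →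
        (b / 8) * (t₂ - t₁) ≤ J (σ t₁) - J (σ t₂) := by
  have hσc : Continuous σ := continuous_iff_continuousAt.2 fun t => (hσ t).continuousAt
  have hfc : Continuous fun t => J (σ t) := hJ.continuous.comp hσc
  -- directional derivative bounds
  have dir0 : ∀ t : ℝ, clarkeDeriv J (σ t) (-((ρ (σ t) * ψ (σ t)) • v (σ t))) ≤ 0 := by
    intro t
    set x := σ t with hx
    set c := ρ x * ψ x with hc
    by_cases hc0 : c = 0
    · rw [hc0]
      simp only [zero_smul, neg_zero]
      rw [clarkeDeriv_zero]
    · have hxR' : x ∈ R' := by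
        by_contra hxn
        exact hc0 (hout x hxn)
      have hcpos : 0 < c :=
        lt_of_le_of_ne (mul_nonneg (hρ x).1 (hψ x).1) (Ne.symm hc0)
      have heq : -(c • v x) = c • (-(v x)) := by rw [smul_neg]
      rw [heq, clarkeDeriv_smul J hJ x _ c hcpos]
      obtain ⟨g, hg, hgle⟩ := exists_clarke_subgradient J hJ x (-(v x))
      have h1 : clarkeDeriv J x (-(v x)) ≤ -(g (v x)) := by
        rw [← map_neg]; exact hgle
      have h2 : 0 ≤ g (v x) := hpos x hxR' g hg
      have : clarkeDeriv J x (-(v x)) ≤ 0 := by linarith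
      exact mul_nonpos_of_nonneg_of_nonpos hcpos.le this
  have dirR : ∀ t : ℝ, σ t ∈ R → ρ (σ t) = 1 → ψ (σ t) = 1 →
      clarkeDeriv J (σ t) (-((ρ (σ t) * ψ (σ t)) • v (σ t))) ≤ -(b / 8) := by
    intro t hR h1 h2
    rw [h1, h2, one_mul, one_smul]
    obtain ⟨g, hg, hgle⟩ := exists_clarke_subgradient J hJ (σ t) (-(v (σ t)))
    have hle : clarkeDeriv J (σ t) (-(v (σ t))) ≤ -(g (v (σ t))) := by
      rw [← map_neg]; exact hgle
    have hb8 : b / 8 ≤ g (v (σ t)) := hv (σ t) hR g hg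
    linarith
  constructor
  · intro t₁ t₂ hle
    have key := image_le_of_liminf_slope_right_le_deriv_boundary
      (f := fun t => J (σ t)) (a := t₁) (b := t₂) (B := fun _ => J (σ t₁)) (B' := fun _ => 0)
      hfc.continuousOn le_rfl continuousOn_const
      (fun x _ => hasDerivWithinAt_const x (Ici x) (J (σ t₁)))
      (fun x _ r hr => (slope_lt_of_clarke_lt J hJ σ _ x (hσ x) r
        (lt_of_le_of_lt (dir0 x) hr)).frequently)
    exact key (right_mem_Icc.2 hle)
  · intro t₁ t₂ hle hgood
    have key := image_le_of_liminf_slope_right_le_deriv_boundary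
      (f := fun t => J (σ t)) (a := t₁) (b := t₂)
      (B := fun s => J (σ t₁) - b / 8 * (s - t₁)) (B' := fun _ => -(b / 8))
      hfc.continuousOn (by simp)
      (by fun_prop)
      (fun x _ => by
        have hB : HasDerivWithinAt (fun s => J (σ t₁) - b / 8 * (s - t₁))
            (0 - b / 8 * 1) (Ici x) x :=
          (hasDerivWithinAt_const x (Ici x) (J (σ t₁))).sub
            (((hasDerivWithinAt_id x (Ici x)).sub_const t₁).const_mul (b / 8))
        simpa using hB)
      (fun x hx r hr => by
        obtain ⟨hxR, hρ1, hψ1⟩ := hgood x (Ico_subset_Icc_self hx)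
        exact (slope_lt_of_clarke_lt J hJ σ _ x (hσ x) r
          (lt_of_le_of_lt (dirR x hxR hρ1 hψ1) hr)).frequently)
    have h2 := key (right_mem_Icc.2 hle)
    linarith
end
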